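/- Let H be a complex Hilbert space and A₀, A₁, B₀, B₁ bounded operators on H, each selfadjoint with A_i² = B_j² = 1, and satisfying A_i B_j = B_j A_i for all i, j ∈ {0,1}. Let ξ ∈ H be a unit vector with ⟨(A₀B₀ + A₀B₁ + A₁B₀ − A₁B₁)ξ, ξ⟩ = 2√2. Then (A₀ + A₁)ξ = √2·B₀ξ and (A₀ − A₁)ξ = √2·B₁ξ. -/

import Mathlib

/-- Let `A₀, A₁, B₀, B₁` be selfadjoint unitaries on a complex Hilbert space `H`, with each
`Aᵢ` commuting with each `Bⱼ`, and let `ξ` be a unit vector with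
`⟨(A₀B₀ + A₀B₁ + A₁B₀ − A₁B₁)ξ, ξ⟩ = 2√2`.  Then `(A₀ + A₁)ξ = √2·B₀ξ` and
`(A₀ − A₁)ξ = √2·B₁ξ`. -/
theorem stmt_7 {H : Type*} [NormedAddCommGroup H] [InnerProductSpace ℂ H] [CompleteSpace H]
    (A₀ A₁ B₀ B₁ : H →L[ℂ] H)
    (hA₀sa : IsSelfAdjoint A₀) (hA₁sa : IsSelfAdjoint A₁)
    (hB₀sa : IsSelfAdjoint B₀) (hB₁sa : IsSelfAdjoint B₁)
    (hA₀ : A₀ * A₀ = 1) (hA₁ : A₁ * A₁ = 1) (hB₀ : B₀ * B₀ = 1) (hB₁ : B₁ * B₁ = 1)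
    (h₀₀ : A₀ * B₀ = B₀ * A₀) (h₀₁ : A₀ * B₁ = B₁ * A₀)
    (h₁₀ : A₁ * B₀ = B₀ * A₁) (h₁₁ : A₁ * B₁ = B₁ * A₁)
    (ξ : H) (hξ : ‖ξ‖ = 1)
    (hval : (inner ℂ ((A₀ * B₀ + A₀ * B₁ + A₁ * B₀ - A₁ * B₁) ξ) ξ : ℂ)
      = ((2 * Real.sqrt 2 : ℝ) : ℂ)) :
    (A₀ + A₁) ξ = ((Real.sqrt 2 : ℝ) : ℂ) • (B₀ ξ) ∧
      (A₀ - A₁) ξ = ((Real.sqrt 2 : ℝ) : ℂ) • (B₁ ξ) := by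
  set s : ℂ := ((Real.sqrt 2 : ℝ) : ℂ) with hs
  have hssa : IsSelfAdjoint s := by
    rw [isSelfAdjoint_iff, hs]; exact Complex.conj_ofReal _
  set β : H →L[ℂ] H := A₀ * B₀ + A₀ * B₁ + A₁ * B₀ - A₁ * B₁ with hβ
  set C : H →L[ℂ] H := A₀ + A₁ - s • B₀ with hC
  set D : H →L[ℂ] H := A₀ - A₁ - s • B₁ with hD
  have hCsa : IsSelfAdjoint C := ((hA₀sa.add hA₁sa).sub (hssa.smul hB₀sa))
  have hDsa : IsSelfAdjoint D := ((hA₀sa.sub hA₁sa).sub (hssa.smul hB₁sa))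
  have hs2 : s * s = 2 := by
    rw [hs, ← Complex.ofReal_mul, Real.mul_self_sqrt (by norm_num)]
    norm_num
  -- operator identity
  have key : C * C + D * D = (8 : ℂ) • (1 : H →L[ℂ] H) - (2 * s) • β := by
    rw [hC, hD, hβ]
    simp only [sub_mul, mul_sub, add_mul, mul_add, smul_mul_assoc, mul_smul_comm,
      hA₀, hA₁, hB₀, hB₁, smul_smul, hs2, h₀₀, h₀₁, h₁₀, h₁₁]
    ext x
    simp only [ContinuousLinearMap.add_apply, ContinuousLinearMap.sub_apply,
      ContinuousLinearMap.smul_apply, ContinuousLinearMap.one_apply,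
      ContinuousLinearMap.mul_apply]
    match_scalars <;> (try ring) <;> (rw [pow_two, hs2]; ring)
  -- inner product lemma for selfadjoint ops
  have inner_sa : ∀ (T : H →L[ℂ] H), IsSelfAdjoint T → ∀ x y : H,
      (inner ℂ (T x) y : ℂ) = inner ℂ x (T y) := by
    intro T hT x y
    conv_lhs => rw [← hT.adjoint_eq]
    exact ContinuousLinearMap.adjoint_inner_left T y x
  have hξβ : (inner ℂ ξ (β ξ) : ℂ) = ((2 * Real.sqrt 2 : ℝ) : ℂ) := by
    rw [← inner_conj_symm, hval, Complex.conj_ofReal]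
  have hnorm : (inner ℂ ξ ξ : ℂ) = 1 := by
    rw [inner_self_eq_norm_sq_to_K, hξ]; norm_num
  have hsum : (inner ℂ (C ξ) (C ξ) : ℂ) + inner ℂ (D ξ) (D ξ) = 0 := by
    rw [inner_sa C hCsa, inner_sa D hDsa, ← inner_add_right]
    have : C (C ξ) + D (D ξ) = (C * C + D * D) ξ := rfl
    rw [this, key]
    simp only [ContinuousLinearMap.sub_apply, ContinuousLinearMap.smul_apply,
      ContinuousLinearMap.one_apply]
    rw [inner_sub_right, inner_smul_right, inner_smul_right, hnorm, hξβ]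
    rw [hs]
    push_cast
    rw [show ((2:ℂ) * Real.sqrt 2) * (2 * Real.sqrt 2)
        = 2 * 2 * ((Real.sqrt 2 : ℂ) * Real.sqrt 2) by ring,
      ← Complex.ofReal_mul, Real.mul_self_sqrt (by norm_num)]
    norm_num
  rw [inner_self_eq_norm_sq_to_K, inner_self_eq_norm_sq_to_K] at hsum
  have hsum' : (‖C ξ‖^2 + ‖D ξ‖^2 : ℝ) = 0 := by
    have := congrArg Complex.re hsum
    simpa [← Complex.ofReal_pow] using this
  have hC0 : C ξ = 0 := by
    have := sq_nonneg ‖C ξ‖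
    have := sq_nonneg ‖D ξ‖
    have : ‖C ξ‖ = 0 := by nlinarith [norm_nonneg (C ξ)]
    rwa [norm_eq_zero] at this
  have hD0 : D ξ = 0 := by
    have := sq_nonneg ‖C ξ‖
    have := sq_nonneg ‖D ξ‖
    have : ‖D ξ‖ = 0 := by nlinarith [norm_nonneg (D ξ)]
    rwa [norm_eq_zero] at this
  constructor
  · have := hC0
    rw [hC] at this
    simp only [ContinuousLinearMap.sub_apply, ContinuousLinearMap.smul_apply, sub_eq_zero] at this
    exact this
  · have := hD0
    rw [hD] at this
    simp only [ContinuousLinearMap.sub_apply, ContinuousLinearMap.smul_apply, sub_eq_zero] at this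
    exact this
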